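/- On ℝ² with the metric g = −a(x⁰)(dx⁰)² + b(x⁰)(dx¹)² (a, b ∈ C¹ strictly positive), the spacetime is causally non-branching and non-intertwining: (1) no causal geodesic γ : [α,β] → ℝ² branches at any t₀ ∈ (α,β); and (2) for every p ∈ ℝ², every ε > 0 and all causal geodesics γ₁, γ₂ : [0,ε] → ℝ² with γ₁(0) = γ₂(0) = p and γ̇₁(0) = γ̇₂(0), either γ₁ = γ₂ on [0,ε] or the set γ₁((0,ε]) ∩ γ₂((0,ε]) has no accumulation point. -/

import Mathlib

open Set Filter Topology
open scoped ENNReal NNReal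

noncomputable section

/-- A geodesic of the metric `g = −a(x⁰)(dx⁰)² + b(x⁰)(dx¹)²` on ℝ², defined on the
interval `I`: a C² curve `γ(s) = (x⁰(s), x¹(s))` satisfying
`ẍ⁰ + (a′/(2a))(ẋ⁰)² + (b′/(2a))(ẋ¹)² = 0` and `ẍ¹ + (b′/b) ẋ⁰ ẋ¹ = 0`. -/
def IsGeodesicAB (a b : ℝ → ℝ) (γ : ℝ → ℝ × ℝ) (I : Set ℝ) : Prop :=
  ContDiffOn ℝ 2 γ I ∧ ∀ s ∈ I,
    (derivWithin (fun u => derivWithin (fun w => (γ w).1) I u) I s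
        + (deriv a ((γ s).1) / (2 * a ((γ s).1)))
            * (derivWithin (fun w => (γ w).1) I s) ^ 2
        + (deriv b ((γ s).1) / (2 * a ((γ s).1)))
            * (derivWithin (fun w => (γ w).2) I s) ^ 2 = 0) ∧
    (derivWithin (fun u => derivWithin (fun w => (γ w).2) I u) I s
        + (deriv b ((γ s).1) / b ((γ s).1))
            * derivWithin (fun w => (γ w).1) I s
            * derivWithin (fun w => (γ w).2) I s = 0)

/-- A vector `v` is causal at the point `x` for the metric
`g = −a(x⁰)(dx⁰)² + b(x⁰)(dx¹)²`. -/
def CausalVecAB (a b : ℝ → ℝ) (x v : ℝ × ℝ) : Prop :=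
  v ≠ 0 ∧ -(a x.1) * v.1 ^ 2 + b x.1 * v.2 ^ 2 ≤ 0

/-- A causal geodesic of the metric `g = −a(x⁰)(dx⁰)² + b(x⁰)(dx¹)²`. -/
def IsCausalGeodesicAB (a b : ℝ → ℝ) (γ : ℝ → ℝ × ℝ) (I : Set ℝ) : Prop :=
  IsGeodesicAB a b γ I ∧ ∀ s ∈ I, CausalVecAB a b (γ s) (derivWithin γ I s)

/-- A geodesic `γ : [α,β] → ℝ²` of the metric branches at `t₀ ∈ (α,β)`. -/
def BranchesAtAB (a b : ℝ → ℝ) (γ : ℝ → ℝ × ℝ) (α β t₀ : ℝ) : Prop :=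
  ∃ ε > 0, α ≤ t₀ - ε ∧ t₀ + ε ≤ β ∧
    ∃ σ : ℝ → ℝ × ℝ, IsGeodesicAB a b σ (Ioo (t₀ - ε) (t₀ + ε)) ∧
      (∀ t ∈ Ioc (t₀ - ε) t₀, γ t = σ t) ∧
      (γ '' Ioo t₀ (t₀ + ε)) ∩ (σ '' Ioo t₀ (t₀ + ε)) = ∅

namespace ABwork

open intervalIntegral MeasureTheory

variable {a b : ℝ → ℝ} {γ : ℝ → ℝ × ℝ} {t₀ t₁ : ℝ}

lemma comp_fst_hasDeriv {s : Set ℝ} {x : ℝ} {d : ℝ × ℝ}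
    (h : HasDerivWithinAt γ d s x) :
    HasDerivWithinAt (fun w => (γ w).1) d.1 s x :=
  HasFDerivAt.comp_hasDerivWithinAt x (hasFDerivAt_fst (𝕜 := ℝ) (p := γ x)) h

lemma comp_snd_hasDeriv {s : Set ℝ} {x : ℝ} {d : ℝ × ℝ}
    (h : HasDerivWithinAt γ d s x) :
    HasDerivWithinAt (fun w => (γ w).2) d.2 s x :=
  HasFDerivAt.comp_hasDerivWithinAt x (hasFDerivAt_snd (𝕜 := ℝ) (p := γ x)) h

lemma comp_fst_deriv {s : Set ℝ} {x : ℝ} (h : DifferentiableWithinAt ℝ γ s x)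
    (hu : UniqueDiffWithinAt ℝ s x) :
    derivWithin (fun w => (γ w).1) s x = (derivWithin γ s x).1 :=
  (comp_fst_hasDeriv h.hasDerivWithinAt).derivWithin hu

lemma comp_snd_deriv {s : Set ℝ} {x : ℝ} (h : DifferentiableWithinAt ℝ γ s x)
    (hu : UniqueDiffWithinAt ℝ s x) :
    derivWithin (fun w => (γ w).2) s x = (derivWithin γ s x).2 :=
  (comp_snd_hasDeriv h.hasDerivWithinAt).derivWithin hu

/-- Conservation of momentum and energy along a geodesic on `Icc t₀ t₁`. -/
lemma conserved (ha : ContDiff ℝ 1 a) (hb : ContDiff ℝ 1 b)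
    (hapos : ∀ t, 0 < a t) (hbpos : ∀ t, 0 < b t)
    (hab : t₀ < t₁) (hg : IsGeodesicAB a b γ (Icc t₀ t₁)) :
    ∀ s ∈ Icc t₀ t₁,
      (b ((γ s).1) * derivWithin (fun w => (γ w).2) (Icc t₀ t₁) s
        = b ((γ t₀).1) * derivWithin (fun w => (γ w).2) (Icc t₀ t₁) t₀)
      ∧ (-(a ((γ s).1)) * (derivWithin (fun w => (γ w).1) (Icc t₀ t₁) s) ^ 2
          + b ((γ s).1) * (derivWithin (fun w => (γ w).2) (Icc t₀ t₁) s) ^ 2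
        = -(a ((γ t₀).1)) * (derivWithin (fun w => (γ w).1) (Icc t₀ t₁) t₀) ^ 2
          + b ((γ t₀).1) * (derivWithin (fun w => (γ w).2) (Icc t₀ t₁) t₀) ^ 2) := by
  set I : Set ℝ := Icc t₀ t₁ with hIdef
  have hUD : UniqueDiffOn ℝ I := uniqueDiffOn_Icc hab
  set u : ℝ → ℝ := fun s => (γ s).1 with hudef
  set v : ℝ → ℝ := fun s => (γ s).2 with hvdef
  set u' : ℝ → ℝ := derivWithin u I with hu'def
  set v' : ℝ → ℝ := derivWithin v I with hv'def
  have hu2 : ContDiffOn ℝ 2 u I := contDiff_fst.comp_contDiffOn hg.1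
  have hv2 : ContDiffOn ℝ 2 v I := contDiff_snd.comp_contDiffOn hg.1
  have hud : DifferentiableOn ℝ u I := hu2.differentiableOn (by norm_num)
  have hvd : DifferentiableOn ℝ v I := hv2.differentiableOn (by norm_num)
  have hu'c : ContDiffOn ℝ 1 u' I := hu2.derivWithin hUD (by norm_num)
  have hv'c : ContDiffOn ℝ 1 v' I := hv2.derivWithin hUD (by norm_num)
  have hu'd : DifferentiableOn ℝ u' I := hu'c.differentiableOn one_ne_zero
  have hv'd : DifferentiableOn ℝ v' I := hv'c.differentiableOn one_ne_zero
  have hadiff : Differentiable ℝ a := ha.differentiable one_ne_zero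
  have hbdiff : Differentiable ℝ b := hb.differentiable one_ne_zero
  -- second derivative formulas, from the geodesic equations
  have hu'' : ∀ s ∈ I, derivWithin u' I s
      = -(deriv a (u s) / (2 * a (u s))) * (u' s) ^ 2
        - (deriv b (u s) / (2 * a (u s))) * (v' s) ^ 2 := by
    intro s hs
    have h := (hg.2 s hs).1
    linarith [h]
  have hv'' : ∀ s ∈ I, derivWithin v' I s
      = -(deriv b (u s) / b (u s)) * u' s * v' s := by
    intro s hs
    have h := (hg.2 s hs).2
    linarith [h]
  -- momentum
  have hCd : ∀ s ∈ I, HasDerivWithinAt (fun s => b (u s) * v' s)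
      (deriv b (u s) * u' s * v' s + b (u s) * derivWithin v' I s) I s := by
    intro s hs
    have h1 : HasDerivWithinAt u (u' s) I s := (hud s hs).hasDerivWithinAt
    have h2 : HasDerivWithinAt (fun s => b (u s)) (deriv b (u s) * u' s) I s :=
      ((hbdiff (u s)).hasDerivAt).comp_hasDerivWithinAt s h1
    have h3 : HasDerivWithinAt v' (derivWithin v' I s) I s := (hv'd s hs).hasDerivWithinAt
    exact h2.mul h3
  have hCzero : ∀ s ∈ I, derivWithin (fun s => b (u s) * v' s) I s = 0 := by
    intro s hs
    rw [(hCd s hs).derivWithin (hUD s hs), hv'' s hs]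
    have hbne : b (u s) ≠ 0 := (hbpos _).ne'
    field_simp
    ring
  have hCdiff : DifferentiableOn ℝ (fun s => b (u s) * v' s) I :=
    (hbdiff.comp_differentiableOn hud).mul hv'd
  have hmom : ∀ s ∈ I, b (u s) * v' s = b (u t₀) * v' t₀ :=
    constant_of_derivWithin_zero hCdiff (fun x hx => hCzero x (Ico_subset_Icc_self hx))
  -- energy
  have hEd : ∀ s ∈ I, HasDerivWithinAt
      (fun s => -(a (u s)) * (u' s) ^ 2 + b (u s) * (v' s) ^ 2)
      (-(deriv a (u s) * u' s) * (u' s) ^ 2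
        + -(a (u s)) * (2 * u' s ^ 1 * derivWithin u' I s)
        + ((deriv b (u s) * u' s) * (v' s) ^ 2
          + b (u s) * (2 * v' s ^ 1 * derivWithin v' I s))) I s := by
    intro s hs
    have h1 : HasDerivWithinAt u (u' s) I s := (hud s hs).hasDerivWithinAt
    have hA : HasDerivWithinAt (fun s => a (u s)) (deriv a (u s) * u' s) I s :=
      ((hadiff (u s)).hasDerivAt).comp_hasDerivWithinAt s h1
    have hB : HasDerivWithinAt (fun s => b (u s)) (deriv b (u s) * u' s) I s :=
      ((hbdiff (u s)).hasDerivAt).comp_hasDerivWithinAt s h1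
    have hu'p : HasDerivWithinAt (fun s => (u' s) ^ 2)
        (2 * u' s ^ 1 * derivWithin u' I s) I s := (hu'd s hs).hasDerivWithinAt.pow 2
    have hv'p : HasDerivWithinAt (fun s => (v' s) ^ 2)
        (2 * v' s ^ 1 * derivWithin v' I s) I s := (hv'd s hs).hasDerivWithinAt.pow 2
    exact ((hA.neg.mul hu'p)).add (hB.mul hv'p)
  have hEzero : ∀ s ∈ I, derivWithin
      (fun s => -(a (u s)) * (u' s) ^ 2 + b (u s) * (v' s) ^ 2) I s = 0 := by
    intro s hs
    rw [(hEd s hs).derivWithin (hUD s hs), hu'' s hs, hv'' s hs]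
    have hane : a (u s) ≠ 0 := (hapos _).ne'
    have hbne : b (u s) ≠ 0 := (hbpos _).ne'
    field_simp
    ring
  have hEdiff : DifferentiableOn ℝ
      (fun s => -(a (u s)) * (u' s) ^ 2 + b (u s) * (v' s) ^ 2) I :=
    (((hadiff.comp_differentiableOn hud).neg).mul (hu'd.pow 2)).add
      ((hbdiff.comp_differentiableOn hud).mul (hv'd.pow 2))
  have hen : ∀ s ∈ I, -(a (u s)) * (u' s) ^ 2 + b (u s) * (v' s) ^ 2
      = -(a (u t₀)) * (u' t₀) ^ 2 + b (u t₀) * (v' t₀) ^ 2 :=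
    constant_of_derivWithin_zero hEdiff (fun x hx => hEzero x (Ico_subset_Icc_self hx))
  exact fun s hs => ⟨hmom s hs, hen s hs⟩

variable {c₀ E₀ : ℝ}

def Ffun (a b : ℝ → ℝ) (c₀ E₀ : ℝ) : ℝ → ℝ :=
  fun x => Real.sqrt ((c₀ ^ 2 / b x - E₀) / a x)

def Gfun (a b : ℝ → ℝ) (c₀ E₀ : ℝ) : ℝ → ℝ :=
  fun x => ∫ t in (0:ℝ)..x, (Ffun a b c₀ E₀ t)⁻¹

lemma Ffun_pos (hapos : ∀ t, 0 < a t)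
    (hgpos : ∀ x, 0 < c₀ ^ 2 / b x - E₀) (x : ℝ) : 0 < Ffun a b c₀ E₀ x :=
  Real.sqrt_pos.2 (div_pos (hgpos x) (hapos x))

lemma Ffun_cont (ha : Continuous a) (hb : Continuous b)
    (hapos : ∀ t, 0 < a t) (hbpos : ∀ t, 0 < b t) :
    Continuous (Ffun a b c₀ E₀) := by
  apply Real.continuous_sqrt.comp
  exact ((continuous_const.div hb fun x => (hbpos x).ne').sub continuous_const).div
    ha fun x => (hapos x).ne'

lemma Gfun_hasDeriv (ha : Continuous a) (hb : Continuous b)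
    (hapos : ∀ t, 0 < a t) (hbpos : ∀ t, 0 < b t)
    (hgpos : ∀ x, 0 < c₀ ^ 2 / b x - E₀) (x : ℝ) :
    HasDerivAt (Gfun a b c₀ E₀) (Ffun a b c₀ E₀ x)⁻¹ x := by
  have hc : Continuous (fun t => (Ffun a b c₀ E₀ t)⁻¹) :=
    (Ffun_cont ha hb hapos hbpos).inv₀ fun t => (Ffun_pos hapos hgpos t).ne'
  exact integral_hasDerivAt_right (hc.intervalIntegrable 0 x)
    (hc.stronglyMeasurableAtFilter _ _) hc.continuousAt

lemma Gfun_strictMono (ha : Continuous a) (hb : Continuous b)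
    (hapos : ∀ t, 0 < a t) (hbpos : ∀ t, 0 < b t)
    (hgpos : ∀ x, 0 < c₀ ^ 2 / b x - E₀) :
    StrictMono (Gfun a b c₀ E₀) := by
  apply strictMono_of_deriv_pos
  intro x
  rw [(Gfun_hasDeriv ha hb hapos hbpos hgpos x).deriv]
  exact inv_pos.2 (Ffun_pos hapos hgpos x)

/-- Sign constancy of a nonvanishing continuous function on an interval. -/
lemma sign_const {f : ℝ → ℝ} {t₀ t₁ : ℝ}
    (hf : ContinuousOn f (Icc t₀ t₁)) (hne : ∀ s ∈ Icc t₀ t₁, f s ≠ 0) :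
    ∀ s ∈ Icc t₀ t₁, (0 < f t₀ ↔ 0 < f s) := by
  intro s hs
  have hsub : uIcc t₀ s ⊆ Icc t₀ t₁ := by
    rw [uIcc_of_le hs.1]; exact Icc_subset_Icc le_rfl hs.2
  have ht₀ : t₀ ∈ Icc t₀ t₁ := ⟨le_rfl, hs.1.trans hs.2⟩
  constructor
  · intro h
    rcases lt_or_gt_of_ne (hne s hs) with hneg | hpos
    · obtain ⟨x, hx, hfx⟩ := intermediate_value_uIcc (hf.mono hsub)
        (Set.mem_uIcc.2 (Or.inr ⟨hneg.le, h.le⟩))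
      exact absurd hfx (hne x (hsub hx))
    · exact hpos
  · intro h
    rcases lt_or_gt_of_ne (hne t₀ ht₀) with hneg | hpos
    · obtain ⟨x, hx, hfx⟩ := intermediate_value_uIcc (hf.mono hsub)
        (Set.mem_uIcc.2 (Or.inl ⟨hneg.le, h.le⟩))
      exact absurd hfx (hne x (hsub hx))
    · exact hpos


/-- The key representation: `G ∘ x⁰` is affine in the parameter along the geodesic. -/
lemma curve_rep (ha : ContDiff ℝ 1 a) (hb : ContDiff ℝ 1 b)
    (hapos : ∀ t, 0 < a t) (hbpos : ∀ t, 0 < b t)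
    (hab : t₀ < t₁) (hg : IsGeodesicAB a b γ (Icc t₀ t₁))
    {c₀ E₀ : ℝ}
    (hc : b ((γ t₀).1) * derivWithin (fun w => (γ w).2) (Icc t₀ t₁) t₀ = c₀)
    (hE : -(a ((γ t₀).1)) * (derivWithin (fun w => (γ w).1) (Icc t₀ t₁) t₀) ^ 2
        + b ((γ t₀).1) * (derivWithin (fun w => (γ w).2) (Icc t₀ t₁) t₀) ^ 2 = E₀)
    (hgpos : ∀ x, 0 < c₀ ^ 2 / b x - E₀)
    {sgn : ℝ} (hsgn1 : sgn = 1 ∨ sgn = -1)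
    (hsgn : derivWithin (fun w => (γ w).1) (Icc t₀ t₁) t₀
      = sgn * Ffun a b c₀ E₀ ((γ t₀).1)) :
    ∀ s ∈ Icc t₀ t₁,
      (Gfun a b c₀ E₀ ((γ s).1)
        = sgn * (s - t₀) + Gfun a b c₀ E₀ ((γ t₀).1))
      ∧ (b ((γ s).1) * derivWithin (fun w => (γ w).2) (Icc t₀ t₁) s = c₀) := by
  set I : Set ℝ := Icc t₀ t₁ with hIdef
  have hUD : UniqueDiffOn ℝ I := uniqueDiffOn_Icc hab
  have ht₀I : t₀ ∈ I := ⟨le_rfl, hab.le⟩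
  set u : ℝ → ℝ := fun s => (γ s).1 with hudef
  set v : ℝ → ℝ := fun s => (γ s).2 with hvdef
  set u' : ℝ → ℝ := derivWithin u I with hu'def
  set v' : ℝ → ℝ := derivWithin v I with hv'def
  have hufold : ∀ r, (γ r).1 = u r := fun _ => rfl
  have hvfold : ∀ r, (γ r).2 = v r := fun _ => rfl
  have hu2 : ContDiffOn ℝ 2 u I := contDiff_fst.comp_contDiffOn hg.1
  have hud : DifferentiableOn ℝ u I := hu2.differentiableOn (by norm_num)
  have hu'c : ContDiffOn ℝ 1 u' I := hu2.derivWithin hUD (by norm_num)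
  have hcons := conserved ha hb hapos hbpos hab hg
  simp only [← hIdef, ← hudef, ← hvdef, ← hu'def, ← hv'def, hufold, hvfold]
    at hcons hc hE hsgn ⊢
  have hmom : ∀ s ∈ I, b (u s) * v' s = c₀ := by
    intro s hs
    rw [(hcons s hs).1, hc]
  have hsq : ∀ s ∈ I, (u' s) ^ 2 = (c₀ ^ 2 / b (u s) - E₀) / a (u s) := by
    intro s hs
    have h1 := (hcons s hs).2
    rw [hE] at h1
    have h2 := hmom s hs
    have hbne : b (u s) ≠ 0 := (hbpos _).ne'
    have hane : a (u s) ≠ 0 := (hapos _).ne'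
    rw [eq_div_iff hane]
    have h3 : b (u s) * (v' s) ^ 2 = c₀ ^ 2 / b (u s) := by
      rw [eq_div_iff hbne]
      linear_combination (b (u s) * v' s + c₀) * h2
    linarith [h1, h3]
  have hFabs : ∀ s ∈ I, Ffun a b c₀ E₀ (u s) = |u' s| := by
    intro s hs
    rw [show Ffun a b c₀ E₀ (u s) = Real.sqrt ((c₀ ^ 2 / b (u s) - E₀) / a (u s)) from rfl,
      ← hsq s hs, Real.sqrt_sq_eq_abs]
  have hu'ne : ∀ s ∈ I, u' s ≠ 0 := by
    intro s hs h0
    have h := hsq s hs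
    rw [h0] at h
    have hpos := div_pos (hgpos (u s)) (hapos (u s))
    rw [← h] at hpos
    simp at hpos
  have hrep : ∀ s ∈ I, u' s = sgn * Ffun a b c₀ E₀ (u s) := by
    have hFt := hFabs t₀ ht₀I
    have hsignc := sign_const hu'c.continuousOn hu'ne
    have hFtpos : 0 < Ffun a b c₀ E₀ (u t₀) := Ffun_pos hapos hgpos _
    intro s hs
    have hFs := hFabs s hs
    rcases hsgn1 with h1 | h1
    · have hpos₀ : 0 < u' t₀ := by rw [hsgn, h1, one_mul]; exact hFtpos
      have hposs : 0 < u' s := (hsignc s hs).1 hpos₀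
      rw [h1, one_mul, hFs, abs_of_pos hposs]
    · have hneg₀ : u' t₀ < 0 := by
        have h2 : u' t₀ = -Ffun a b c₀ E₀ (u t₀) := by rw [hsgn, h1]; ring
        rw [h2]; linarith
      have hnegs : u' s < 0 := by
        by_contra hge
        push_neg at hge
        have h0s : 0 < u' s := lt_of_le_of_ne hge (Ne.symm (hu'ne s hs))
        exact absurd ((hsignc s hs).2 h0s) (not_lt.2 hneg₀.le)
      rw [h1, hFs, abs_of_neg hnegs]; ring
  -- G ∘ u is affine
  have hGd : ∀ s ∈ I, HasDerivWithinAt (fun s => Gfun a b c₀ E₀ (u s) - sgn * s)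
      ((Ffun a b c₀ E₀ (u s))⁻¹ * u' s - sgn * 1) I s := by
    intro s hs
    have h1 : HasDerivWithinAt u (u' s) I s := (hud s hs).hasDerivWithinAt
    have hG := Gfun_hasDeriv ha.continuous hb.continuous hapos hbpos hgpos (u s)
    exact (hG.comp_hasDerivWithinAt s h1).sub
      ((hasDerivWithinAt_id s I).const_mul sgn)
  have hGzero : ∀ s ∈ I, derivWithin (fun s => Gfun a b c₀ E₀ (u s) - sgn * s) I s = 0 := by
    intro s hs
    rw [(hGd s hs).derivWithin (hUD s hs), hrep s hs]
    have hFne : Ffun a b c₀ E₀ (u s) ≠ 0 := (Ffun_pos hapos hgpos _).ne'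
    field_simp
    ring
  have hGdiff : DifferentiableOn ℝ (fun s => Gfun a b c₀ E₀ (u s) - sgn * s) I :=
    fun s hs => ((hGd s hs).differentiableWithinAt).mono (le_refl I)
  have hconst := constant_of_derivWithin_zero hGdiff
    (fun x hx => hGzero x (Ico_subset_Icc_self hx))
  intro s hs
  refine ⟨?_, hmom s hs⟩
  have h := hconst s hs
  linarith [h]

/-- Uniqueness of causal geodesics with given initial data, on `Icc t₀ t₁`. -/
lemma uniqueOn (ha : ContDiff ℝ 1 a) (hb : ContDiff ℝ 1 b)
    (hapos : ∀ t, 0 < a t) (hbpos : ∀ t, 0 < b t)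
    (hab : t₀ < t₁) {γ₁ γ₂ : ℝ → ℝ × ℝ}
    (h1 : IsGeodesicAB a b γ₁ (Icc t₀ t₁)) (h2 : IsGeodesicAB a b γ₂ (Icc t₀ t₁))
    (hval : γ₁ t₀ = γ₂ t₀)
    (hder : derivWithin γ₁ (Icc t₀ t₁) t₀ = derivWithin γ₂ (Icc t₀ t₁) t₀)
    (hcaus : CausalVecAB a b (γ₁ t₀) (derivWithin γ₁ (Icc t₀ t₁) t₀)) :
    ∀ s ∈ Icc t₀ t₁, γ₁ s = γ₂ s := by
  set I : Set ℝ := Icc t₀ t₁ with hIdef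
  have hUD : UniqueDiffOn ℝ I := uniqueDiffOn_Icc hab
  have ht₀I : t₀ ∈ I := ⟨le_rfl, hab.le⟩
  set d : ℝ × ℝ := derivWithin γ₁ I t₀ with hddef
  have hdw1 : DifferentiableWithinAt ℝ γ₁ I t₀ :=
    (h1.1.differentiableOn (by norm_num)) t₀ ht₀I
  have hdw2 : DifferentiableWithinAt ℝ γ₂ I t₀ :=
    (h2.1.differentiableOn (by norm_num)) t₀ ht₀I
  have hf1 : derivWithin (fun w => (γ₁ w).1) I t₀ = d.1 := comp_fst_deriv hdw1 (hUD t₀ ht₀I)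
  have hs1 : derivWithin (fun w => (γ₁ w).2) I t₀ = d.2 := comp_snd_deriv hdw1 (hUD t₀ ht₀I)
  have hf2 : derivWithin (fun w => (γ₂ w).1) I t₀ = d.1 := by
    rw [comp_fst_deriv hdw2 (hUD t₀ ht₀I), ← hder]
  have hs2 : derivWithin (fun w => (γ₂ w).2) I t₀ = d.2 := by
    rw [comp_snd_deriv hdw2 (hUD t₀ ht₀I), ← hder]
  set x₀ : ℝ := (γ₁ t₀).1 with hx₀
  set c₀ : ℝ := b x₀ * d.2 with hc₀
  set E₀ : ℝ := -(a x₀) * d.1 ^ 2 + b x₀ * d.2 ^ 2 with hE₀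
  have hE₀le : E₀ ≤ 0 := hcaus.2
  have hdne : d ≠ 0 := hcaus.1
  have hgpos : ∀ x, 0 < c₀ ^ 2 / b x - E₀ := by
    intro x
    by_cases hc0 : c₀ = 0
    · have hd2 : d.2 = 0 := by
        rw [hc₀] at hc0
        rcases mul_eq_zero.1 hc0 with h | h
        · exact absurd h (hbpos _).ne'
        · exact h
      have hE0lt : E₀ < 0 := by
        rcases lt_or_eq_of_le hE₀le with h | h
        · exact h
        · exfalso
          have hd1 : d.1 = 0 := by
            have h' : -(a x₀) * d.1 ^ 2 + b x₀ * d.2 ^ 2 = 0 := by rw [← hE₀, h]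
            rw [hd2] at h'
            have : a x₀ * d.1 ^ 2 = 0 := by linarith
            rcases mul_eq_zero.1 this with h'' | h''
            · exact absurd h'' (hapos _).ne'
            · exact pow_eq_zero_iff (by norm_num) |>.1 h''
          exact hdne (Prod.ext hd1 hd2)
      have : c₀ ^ 2 / b x = 0 := by rw [hc0]; simp
      rw [this]; linarith
    · have h2 : 0 < c₀ ^ 2 :=
        lt_of_le_of_ne (sq_nonneg c₀) (Ne.symm (pow_ne_zero 2 hc0))
      have h3 : 0 < c₀ ^ 2 / b x := div_pos h2 (hbpos x)
      linarith
  have hd1sq : d.1 ^ 2 = (c₀ ^ 2 / b x₀ - E₀) / a x₀ := by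
    rw [hc₀, hE₀]
    have hbne : b x₀ ≠ 0 := (hbpos _).ne'
    have hane : a x₀ ≠ 0 := (hapos _).ne'
    field_simp
    ring
  have hFx₀ : Ffun a b c₀ E₀ x₀ = |d.1| := by
    rw [show Ffun a b c₀ E₀ x₀ = Real.sqrt ((c₀ ^ 2 / b x₀ - E₀) / a x₀) from rfl,
      ← hd1sq, Real.sqrt_sq_eq_abs]
  have hd1ne : d.1 ≠ 0 := by
    intro h0
    have h := hd1sq
    rw [h0] at h
    have hpos := div_pos (hgpos x₀) (hapos x₀)
    rw [← h] at hpos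
    simp at hpos
  set sgn : ℝ := if 0 < d.1 then 1 else -1 with hsgndef
  have hsgn1 : sgn = 1 ∨ sgn = -1 := by
    by_cases h : 0 < d.1
    · left; rw [hsgndef, if_pos h]
    · right; rw [hsgndef, if_neg h]
  have hsgnval : d.1 = sgn * Ffun a b c₀ E₀ x₀ := by
    rw [hFx₀]
    rcases hd1ne.lt_or_gt with hlt | hlt
    · rw [hsgndef, if_neg (not_lt.2 hlt.le), abs_of_neg hlt]; ring
    · rw [hsgndef, if_pos hlt, abs_of_pos hlt]; ring
  have hrep1 := curve_rep ha hb hapos hbpos hab h1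
    (c₀ := c₀) (E₀ := E₀) (by rw [hs1]) (by rw [hf1, hs1]) hgpos hsgn1
    (by rw [hf1]; exact hsgnval)
  have hrep2 := curve_rep ha hb hapos hbpos hab h2
    (c₀ := c₀) (E₀ := E₀) (by rw [hs2, ← hval]) (by rw [hf2, hs2, ← hval]) hgpos hsgn1
    (by rw [hf2, ← hval]; exact hsgnval)
  have hGinj := (Gfun_strictMono ha.continuous hb.continuous hapos hbpos hgpos).injective
  have huu : ∀ s ∈ I, (γ₁ s).1 = (γ₂ s).1 := by
    intro s hs
    apply hGinj
    rw [(hrep1 s hs).1, (hrep2 s hs).1, hval]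
  have hvd : ∀ s ∈ I, derivWithin (fun w => (γ₁ w).2) I s
      = derivWithin (fun w => (γ₂ w).2) I s := by
    intro s hs
    have e1 := (hrep1 s hs).2
    have e2 := (hrep2 s hs).2
    rw [huu s hs] at e1
    exact mul_left_cancel₀ (hbpos ((γ₂ s).1)).ne' (e1.trans e2.symm)
  have hv1d : DifferentiableOn ℝ (fun w => (γ₁ w).2) I :=
    (contDiff_snd.comp_contDiffOn h1.1).differentiableOn (by norm_num)
  have hv2d : DifferentiableOn ℝ (fun w => (γ₂ w).2) I :=
    (contDiff_snd.comp_contDiffOn h2.1).differentiableOn (by norm_num)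
  have hDd : ∀ s ∈ I, HasDerivWithinAt (fun s => (γ₁ s).2 - (γ₂ s).2) 0 I s := by
    intro s hs
    have a1 := (hv1d s hs).hasDerivWithinAt
    have a2 := (hv2d s hs).hasDerivWithinAt
    have := a1.sub a2
    rw [hvd s hs, sub_self] at this
    exact this
  have hDzero : ∀ s ∈ I, derivWithin (fun s => (γ₁ s).2 - (γ₂ s).2) I s = 0 :=
    fun s hs => (hDd s hs).derivWithin (hUD s hs)
  have hDconst := constant_of_derivWithin_zero (hv1d.sub hv2d)
    (fun x hx => hDzero x (Ico_subset_Icc_self hx))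
  intro s hs
  have hD := hDconst s hs
  simp only [Pi.sub_apply, hval, sub_self] at hD
  exact Prod.ext (huu s hs) (by linarith [hD])

/-- A geodesic on a set `S` restricts to a geodesic on any compact interval
contained in the interior of `S`. -/
lemma restrict_geodesic {S : Set ℝ} (hg : IsGeodesicAB a b γ S)
    (hab : t₀ < t₁) (hnh : ∀ s ∈ Icc t₀ t₁, S ∈ 𝓝 s) :
    IsGeodesicAB a b γ (Icc t₀ t₁) := by
  have hUD : UniqueDiffOn ℝ (Icc t₀ t₁) := uniqueDiffOn_Icc hab
  have hsub : Icc t₀ t₁ ⊆ S := fun s hs => mem_of_mem_nhds (hnh s hs)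
  have hJint : Icc t₀ t₁ ⊆ interior S := fun r hr => mem_interior_iff_mem_nhds.2 (hnh r hr)
  have hUopen : IsOpen (interior S) := isOpen_interior
  refine ⟨hg.1.mono hsub, ?_⟩
  intro s hs
  have key : ∀ f : ℝ → ℝ, ContDiffOn ℝ 2 f (interior S) →
      (∀ r ∈ Icc t₀ t₁, derivWithin f (Icc t₀ t₁) r = derivWithin f S r) ∧
      derivWithin (fun x => derivWithin f (Icc t₀ t₁) x) (Icc t₀ t₁) s
        = derivWithin (fun x => derivWithin f S x) S s := by
    intro f hf2
    have hfd : ∀ r ∈ interior S, derivWithin f S r = deriv f r := by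
      intro r hr
      exact derivWithin_of_mem_nhds (mem_interior_iff_mem_nhds.1 hr)
    have hfdiff : ∀ r ∈ interior S, DifferentiableAt ℝ f r := by
      intro r hr
      exact (hf2.differentiableOn (by norm_num)).differentiableAt (hUopen.mem_nhds hr)
    have hfd' : ∀ r ∈ Icc t₀ t₁, derivWithin f (Icc t₀ t₁) r = deriv f r := by
      intro r hr
      exact ((hfdiff r (hJint hr)).hasDerivAt.hasDerivWithinAt).derivWithin (hUD r hr)
    have hderivC : ContDiffOn ℝ 1 (deriv f) (interior S) :=
      hf2.deriv_of_isOpen hUopen (by norm_num)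
    have hderivdiff : DifferentiableAt ℝ (deriv f) s :=
      (hderivC.differentiableOn one_ne_zero).differentiableAt (hUopen.mem_nhds (hJint hs))
    constructor
    · intro r hr
      rw [hfd' r hr, hfd r (hJint hr)]
    · have e1 : derivWithin (fun x => derivWithin f (Icc t₀ t₁) x) (Icc t₀ t₁) s
          = derivWithin (deriv f) (Icc t₀ t₁) s :=
        derivWithin_congr (fun r hr => hfd' r hr) (hfd' s hs)
      have e2 : derivWithin (deriv f) (Icc t₀ t₁) s = deriv (deriv f) s :=
        (hderivdiff.hasDerivAt.hasDerivWithinAt).derivWithin (hUD s hs)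
      have e3 : derivWithin (fun x => derivWithin f S x) S s
          = derivWithin (deriv f) S s := by
        apply Filter.EventuallyEq.derivWithin_eq
        · filter_upwards [mem_nhdsWithin_of_mem_nhds (hUopen.mem_nhds (hJint hs))]
            with r hr using hfd r hr
        · exact hfd s (hJint hs)
      have e4 : derivWithin (deriv f) S s = deriv (deriv f) s :=
        derivWithin_of_mem_nhds (hnh s hs)
      rw [e1, e2, e3, e4]
  obtain ⟨hu1, hu2⟩ := key (fun w => (γ w).1)
    (contDiff_fst.comp_contDiffOn (hg.1.mono interior_subset))
  obtain ⟨hv1, hv2⟩ := key (fun w => (γ w).2)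
    (contDiff_snd.comp_contDiffOn (hg.1.mono interior_subset))
  have horig := hg.2 s (hsub hs)
  constructor
  · rw [hu2, hu1 s hs, hv1 s hs]
    exact horig.1
  · rw [hv2, hu1 s hs, hv1 s hs]
    exact horig.2
end ABwork

open ABwork

/-- Theorem A.2: the spacetime `(ℝ², −a(x⁰)(dx⁰)² + b(x⁰)(dx¹)²)` is causally
non-branching and non-intertwining. -/
theorem ab_causallyNonBranching_and_nonIntertwining
    (a b : ℝ → ℝ) (ha : ContDiff ℝ 1 a) (hb : ContDiff ℝ 1 b)
    (hapos : ∀ t, 0 < a t) (hbpos : ∀ t, 0 < b t) :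
    (∀ (γ : ℝ → ℝ × ℝ) (α β : ℝ), α < β →
      IsCausalGeodesicAB a b γ (Set.Icc α β) →
      ∀ t₀ ∈ Set.Ioo α β, ¬ BranchesAtAB a b γ α β t₀) ∧
    (∀ (p : ℝ × ℝ) (ε : ℝ), 0 < ε → ∀ γ₁ γ₂ : ℝ → ℝ × ℝ,
      IsCausalGeodesicAB a b γ₁ (Set.Icc 0 ε) →
      IsCausalGeodesicAB a b γ₂ (Set.Icc 0 ε) →
      γ₁ 0 = p → γ₂ 0 = p →
      derivWithin γ₁ (Set.Icc 0 ε) 0 = derivWithin γ₂ (Set.Icc 0 ε) 0 →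
      (∀ t ∈ Set.Icc (0:ℝ) ε, γ₁ t = γ₂ t) ∨
        ¬ ∃ z : ℝ × ℝ, AccPt z (Filter.principal
          ((γ₁ '' Set.Ioc 0 ε) ∩ (γ₂ '' Set.Ioc 0 ε)))) := by
  constructor
  · -- non-branching
    rintro γ α β hαβ hγ t₀ ht₀ ⟨ε, hε, hαε, hεβ, σ, hσ, hagree, hdisj⟩
    set t₁ : ℝ := t₀ + ε / 2 with ht₁
    have hab : t₀ < t₁ := by rw [ht₁]; linarith
    have hUD : UniqueDiffOn ℝ (Icc t₀ t₁) := uniqueDiffOn_Icc hab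
    have ht₀J : t₀ ∈ Icc t₀ t₁ := ⟨le_rfl, hab.le⟩
    have hαt₀ : α < t₀ := ht₀.1
    have ht₀β : t₀ < β := ht₀.2
    have hnh1 : ∀ s ∈ Icc t₀ t₁, Icc α β ∈ 𝓝 s := by
      intro s hs
      exact Icc_mem_nhds (by linarith [hs.1]) (by rw [ht₁] at hs; linarith [hs.2])
    have hnh2 : ∀ s ∈ Icc t₀ t₁, Ioo (t₀ - ε) (t₀ + ε) ∈ 𝓝 s := by
      intro s hs
      refine isOpen_Ioo.mem_nhds ⟨by linarith [hs.1], ?_⟩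
      rw [ht₁] at hs; linarith [hs.2]
    have hg1 : IsGeodesicAB a b γ (Icc t₀ t₁) := restrict_geodesic hγ.1 hab hnh1
    have hg2 : IsGeodesicAB a b σ (Icc t₀ t₁) := restrict_geodesic hσ hab hnh2
    have hval : γ t₀ = σ t₀ := hagree t₀ ⟨by linarith, le_rfl⟩
    have hdγ : DifferentiableAt ℝ γ t₀ :=
      (hγ.1.1.differentiableOn (by norm_num)).differentiableAt
        (Icc_mem_nhds hαt₀ ht₀β)
    have hdσ : DifferentiableAt ℝ σ t₀ :=
      (hσ.1.differentiableOn (by norm_num)).differentiableAt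
        (isOpen_Ioo.mem_nhds ⟨by linarith, by linarith⟩)
    have hUIic : UniqueDiffWithinAt ℝ (Iic t₀) t₀ :=
      uniqueDiffOn_Iic t₀ t₀ (mem_Iic.2 le_rfl)
    have heqev : γ =ᶠ[𝓝[Iic t₀] t₀] σ := by
      have h1 : Ioi (t₀ - ε) ∈ 𝓝[Iic t₀] t₀ :=
        nhdsWithin_le_nhds (Ioi_mem_nhds (by linarith))
      filter_upwards [h1, self_mem_nhdsWithin] with r hr1 hr2
      exact hagree r ⟨hr1, hr2⟩
    have hderiv_eq : deriv γ t₀ = deriv σ t₀ := by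
      have h1 : HasDerivWithinAt γ (deriv γ t₀) (Iic t₀) t₀ :=
        hdγ.hasDerivAt.hasDerivWithinAt
      have h2 : HasDerivWithinAt γ (deriv σ t₀) (Iic t₀) t₀ :=
        (hdσ.hasDerivAt.hasDerivWithinAt).congr_of_eventuallyEq heqev hval
      rw [← h1.derivWithin hUIic, ← h2.derivWithin hUIic]
    have hdJγ : derivWithin γ (Icc t₀ t₁) t₀ = deriv γ t₀ :=
      hdγ.hasDerivAt.hasDerivWithinAt.derivWithin (hUD t₀ ht₀J)
    have hdJσ : derivWithin σ (Icc t₀ t₁) t₀ = deriv σ t₀ :=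
      hdσ.hasDerivAt.hasDerivWithinAt.derivWithin (hUD t₀ ht₀J)
    have hder : derivWithin γ (Icc t₀ t₁) t₀ = derivWithin σ (Icc t₀ t₁) t₀ := by
      rw [hdJγ, hdJσ, hderiv_eq]
    have hcaus : CausalVecAB a b (γ t₀) (derivWithin γ (Icc t₀ t₁) t₀) := by
      have h := hγ.2 t₀ ⟨by linarith, by linarith⟩
      have e : derivWithin γ (Icc α β) t₀ = derivWithin γ (Icc t₀ t₁) t₀ := by
        rw [derivWithin_of_mem_nhds (Icc_mem_nhds hαt₀ ht₀β), hdJγ]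
      rwa [e] at h
    have heq := uniqueOn ha hb hapos hbpos hab hg1 hg2 hval hder hcaus
    set t : ℝ := t₀ + ε / 4 with htdef
    have htJ : t ∈ Icc t₀ t₁ := ⟨by rw [htdef]; linarith, by rw [htdef, ht₁]; linarith⟩
    have htIoo : t ∈ Ioo t₀ (t₀ + ε) := ⟨by rw [htdef]; linarith, by rw [htdef]; linarith⟩
    have hmem : γ t ∈ (γ '' Ioo t₀ (t₀ + ε)) ∩ (σ '' Ioo t₀ (t₀ + ε)) :=
      ⟨⟨t, htIoo, rfl⟩, ⟨t, htIoo, (heq t htJ).symm⟩⟩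
    rw [hdisj] at hmem
    exact hmem
  · -- non-intertwining
    intro p ε hε γ₁ γ₂ h1 h2 hp1 hp2 hder
    left
    have hval : γ₁ 0 = γ₂ 0 := by rw [hp1, hp2]
    exact uniqueOn ha hb hapos hbpos hε h1.1 h2.1 hval hder
      (h2.2 0 ⟨le_rfl, hε.le⟩ |> fun _ => h1.2 0 ⟨le_rfl, hε.le⟩)
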